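/- Let F be a finite field, f, g, h ∈ F[X] with deg f, deg g ≤ M−1 and deg h ≤ 2M−2, and let α ∈ F be arbitrary. If f·g ≠ h, then for r chosen uniformly at random from F, the probability that r·(f(r)·g(r) − h(r)) + α = 0 is at most (2M−1)/|F|. -/

import Mathlib

open Polynomial

theorem stmt_1 {F : Type*} [Field F] [Fintype F] [DecidableEq F]
    (M : ℕ) (hM : 1 ≤ M) (f g h : F[X]) (α : F)
    (hf : f.degree ≤ (M - 1 : ℕ)) (hg : g.degree ≤ (M - 1 : ℕ))
    (hh : h.degree ≤ (2 * M - 2 : ℕ))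
    (hcard : 2 * M - 1 ≤ Fintype.card F)
    (hne : f * g ≠ h) :
    ((Finset.univ.filter
        (fun r : F => r * (f.eval r * g.eval r - h.eval r) + α = 0)).card : ℝ) /
        (Fintype.card F : ℝ) ≤ (2 * M - 1 : ℕ) / (Fintype.card F : ℝ) := by
  set P : F[X] := X * (f * g - h) with hP
  set Q : F[X] := P + C α with hQ
  have hsub : f * g - h ≠ 0 := sub_ne_zero.mpr hne
  have hPdeg : 1 ≤ P.degree := by
    rw [hP, degree_mul, degree_X]
    have : (0 : WithBot ℕ) ≤ (f * g - h).degree := zero_le_degree_iff.mpr hsub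
    calc (1 : WithBot ℕ) = 1 + 0 := by norm_num
    _ ≤ 1 + (f * g - h).degree := by exact add_le_add_right this 1
  have hQ0 : Q ≠ 0 := by
    have hClt : (C α).degree < P.degree := lt_of_le_of_lt degree_C_le (lt_of_lt_of_le (by norm_num) hPdeg)
    have : Q.degree = P.degree := by rw [hQ]; exact degree_add_eq_left_of_degree_lt hClt
    intro hc
    rw [hc, degree_zero] at this
    exact absurd (this ▸ hPdeg) (by simp)
  have hQdeg : Q.natDegree ≤ 2 * M - 1 := by
    have hfg : (f * g).degree ≤ ((2 * M - 2 : ℕ) : WithBot ℕ) := by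
      rw [degree_mul]
      calc f.degree + g.degree ≤ ((M - 1 : ℕ) : WithBot ℕ) + ((M - 1 : ℕ) : WithBot ℕ) :=
        add_le_add hf hg
      _ = (((M - 1) + (M - 1) : ℕ) : WithBot ℕ) := by push_cast; ring
      _ ≤ ((2 * M - 2 : ℕ) : WithBot ℕ) := by
          apply Nat.cast_le.mpr; omega
    have hsubdeg : (f * g - h).degree ≤ ((2 * M - 2 : ℕ) : WithBot ℕ) :=
      le_trans (degree_sub_le _ _) (max_le hfg hh)
    have hPd : P.degree ≤ ((2 * M - 1 : ℕ) : WithBot ℕ) := by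
      rw [hP, degree_mul, degree_X]
      calc 1 + (f * g - h).degree ≤ 1 + ((2 * M - 2 : ℕ) : WithBot ℕ) :=
        add_le_add_right hsubdeg 1
      _ = ((2 * M - 1 : ℕ) : WithBot ℕ) := by
          rw [← Nat.cast_one, ← Nat.cast_add]; congr 1; omega
    have hQd : Q.degree ≤ ((2 * M - 1 : ℕ) : WithBot ℕ) := by
      refine le_trans (degree_add_le _ _) (max_le hPd ?_)
      exact le_trans degree_C_le (by exact_mod_cast Nat.cast_le.mpr (by omega : 0 ≤ 2 * M - 1))
    exact natDegree_le_iff_degree_le.mpr hQd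
  have hsubset : (Finset.univ.filter
      (fun r : F => r * (f.eval r * g.eval r - h.eval r) + α = 0)) ⊆ Q.roots.toFinset := by
    intro r hr
    simp only [Finset.mem_filter] at hr
    rw [Multiset.mem_toFinset, mem_roots hQ0]
    simp [hQ, hP, IsRoot, hr.2]
  have hcardle : (Finset.univ.filter
      (fun r : F => r * (f.eval r * g.eval r - h.eval r) + α = 0)).card ≤ 2 * M - 1 := by
    calc _ ≤ Q.roots.toFinset.card := Finset.card_le_card hsubset
    _ ≤ Multiset.card Q.roots := Q.roots.toFinset_card_le
    _ ≤ Q.natDegree := Q.card_roots'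
    _ ≤ 2 * M - 1 := hQdeg
  have hFpos : (0 : ℝ) < (Fintype.card F : ℝ) := by exact_mod_cast Fintype.card_pos
  have : ((Finset.univ.filter
      (fun r : F => r * (f.eval r * g.eval r - h.eval r) + α = 0)).card : ℝ) ≤ ((2 * M - 1 : ℕ) : ℝ) := by
    exact_mod_cast hcardle
  gcongr
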